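/- In the polynomial ring ℂ[k₁, k₂] with kᵢ = (aᵢ, bᵢ, cᵢ, dᵢ), the sequence (a₁d₁ - b₁c₁, a₂d₂ - b₂c₂, a₁d₂ - b₁c₂ + a₂d₁ - b₂c₁) is a regular sequence. -/

import Mathlib

set_option maxHeartbeats 1000000
set_option synthInstance.maxHeartbeats 1000000

open MvPolynomial Ideal

namespace Stmt10Aux

abbrev ii : Type := Fin 2 × Fin 4
abbrev RR : Type := MvPolynomial ii ℂ

noncomputable def sg (v : ii) : RR →ₐ[ℂ] RR := aeval (fun u => if u = v then 0 else X u)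

lemma X_dvd_sub_sg (v : ii) (p : RR) : X v ∣ p - sg v p := by
  induction p using MvPolynomial.induction_on with
  | C a => simp [sg]
  | add p q hp hq =>
      have h : p + q - sg v (p + q) = (p - sg v p) + (q - sg v q) := by
        rw [map_add]; ring
      rw [h]; exact dvd_add hp hq
  | mul_X p j hp =>
      rw [_root_.map_mul]
      by_cases h : j = v
      · subst h; simp [sg]
      · have h1 : sg v (X j) = X j := by simp [sg, h]
        rw [h1]
        have h2 : p * X j - sg v p * X j = (p - sg v p) * X j := by ring
        rw [h2]
        exact Dvd.dvd.mul_right hp _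

lemma X_dvd_of_sg_eq_zero {v : ii} {p : RR} (h : sg v p = 0) : X v ∣ p := by
  have h1 := X_dvd_sub_sg v p; rwa [h, sub_zero] at h1

noncomputable def f1 : RR := X (0,0) * X (0,3) - X (0,1) * X (0,2)
noncomputable def f2 : RR := X (1,0) * X (1,3) - X (1,1) * X (1,2)
noncomputable def f3 : RR :=
  X (0,0) * X (1,3) - X (0,1) * X (1,2) + X (1,0) * X (0,3) - X (1,1) * X (0,2)

lemma pt_ne_zero (p : RR) (pt : ii → ℂ) (h : eval pt p = 1) : p ≠ 0 := by
  intro hp; rw [hp, map_zero] at h; exact zero_ne_one h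

lemma f1_ne : f1 ≠ 0 :=
  pt_ne_zero _ (fun u => if u = (0,0) ∨ u = (0,3) then 1 else 0) (by simp [f1])
lemma f2_ne : f2 ≠ 0 :=
  pt_ne_zero _ (fun u => if u = (1,0) ∨ u = (1,3) then 1 else 0) (by simp [f2])

noncomputable def uu : RR := X (0,1) * X (1,3) - X (1,1) * X (0,3)
noncomputable def vv : RR := X (0,2) * X (1,3) - X (1,2) * X (0,3)

lemma uu_ne : uu ≠ 0 :=
  pt_ne_zero _ (fun u => if u = (0,1) ∨ u = (1,3) then 1 else 0) (by simp [uu])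
lemma vv_ne : vv ≠ 0 :=
  pt_ne_zero _ (fun u => if u = (0,2) ∨ u = (1,3) then 1 else 0) (by simp [vv])

lemma sg_self (v : ii) : sg v (X v) = 0 := by simp [sg]
lemma sg_f1_d1 : sg (0,3) f1 = -(X (0,1) * X (0,2)) := by simp [sg, f1] <;> decide
lemma sg_f2_d1 : sg (0,3) f2 = f2 := by simp [sg, f2] <;> decide
lemma sg_f2_b1 : sg (0,1) f2 = f2 := by simp [sg, f2] <;> decide
lemma sg_f2_c1 : sg (0,2) f2 = f2 := by simp [sg, f2] <;> decide
lemma sg_f2_d2 : sg (1,3) f2 = -(X (1,1) * X (1,2)) := by simp [sg, f2] <;> decide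
lemma sg_f1_d2 : sg (1,3) f1 = f1 := by simp [sg, f1] <;> decide
lemma sg_f1_b2 : sg (1,1) f1 = f1 := by simp [sg, f1] <;> decide
lemma sg_f1_c2 : sg (1,2) f1 = f1 := by simp [sg, f1] <;> decide

/-- `D1` is regular modulo `(f1)`. -/
lemma E1 (g : RR) (h : f1 ∣ X (0,3) * g) : f1 ∣ g := by
  obtain ⟨h1, hh⟩ := h
  have h2 := congrArg (sg (0,3)) hh
  rw [_root_.map_mul, _root_.map_mul, sg_f1_d1, sg_self, zero_mul] at h2
  have hz : sg (0,3) h1 = 0 := by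
    rcases mul_eq_zero.mp h2.symm with h' | h'
    · exact absurd h' (by
        have hne : (X ((0:Fin 2),(1:Fin 4)) : RR) * X (0,2) ≠ 0 :=
          mul_ne_zero (X_ne_zero _) (X_ne_zero _)
        simpa using hne)
    · exact h'
  obtain ⟨h1', rfl⟩ := X_dvd_of_sg_eq_zero hz
  refine ⟨h1', mul_left_cancel₀ (X_ne_zero (0,3)) ?_⟩
  rw [hh]; ring

/-- `D1` is regular modulo `(f1, f2)`. -/
lemma E2a (g : RR) (h : X (0,3) * g ∈ span ({f1, f2} : Set RR)) :
    g ∈ span ({f1, f2} : Set RR) := by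
  rw [mem_span_pair] at h
  obtain ⟨p, q, hpq⟩ := h
  have h0 := congrArg (sg (0,3)) hpq.symm
  rw [_root_.map_mul, sg_self, zero_mul, map_add, _root_.map_mul, _root_.map_mul,
    sg_f1_d1, sg_f2_d1] at h0
  set p0 := sg (0,3) p with hp0
  set q0 := sg (0,3) q with hq0
  have h1 : X (0,1) * (X (0,2) * p0) = q0 * f2 := by linear_combination h0
  have h2 := congrArg (sg (0,1)) h1
  rw [_root_.map_mul, sg_self, zero_mul, _root_.map_mul, sg_f2_b1] at h2
  obtain ⟨q1, hq1e⟩ : X (0,1) ∣ q0 := X_dvd_of_sg_eq_zero (by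
    rcases mul_eq_zero.mp h2.symm with h' | h'
    · exact h'
    · exact absurd h' f2_ne)
  have h3 : X (0,2) * p0 = q1 * f2 := by
    apply mul_left_cancel₀ (X_ne_zero ((0,1) : ii))
    rw [h1, hq1e]; ring
  have h4 := congrArg (sg (0,2)) h3
  rw [_root_.map_mul, sg_self, zero_mul, _root_.map_mul, sg_f2_c1] at h4
  obtain ⟨q2, hq2e⟩ : X (0,2) ∣ q1 := X_dvd_of_sg_eq_zero (by
    rcases mul_eq_zero.mp h4.symm with h' | h'
    · exact h'
    · exact absurd h' f2_ne)
  have h5 : p0 = q2 * f2 := by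
    apply mul_left_cancel₀ (X_ne_zero ((0,2) : ii))
    rw [h3, hq2e]; ring
  obtain ⟨p', hp'⟩ := X_dvd_sub_sg (0,3) p
  obtain ⟨q', hq'⟩ := X_dvd_sub_sg (0,3) q
  have hp : p = q2 * f2 + X (0,3) * p' := by
    rw [← hp0, ← h5] at *; linear_combination hp'
  have hq : q = X (0,1) * (X (0,2) * q2) + X (0,3) * q' := by
    have hd : q - q0 = X (0,3) * q' := hq'
    rw [hq1e, hq2e] at hd; linear_combination hd
  have hg : g = f1 * p' + f2 * (q' + X (0,0) * q2) := by
    apply mul_left_cancel₀ (X_ne_zero ((0,3) : ii))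
    rw [← hpq, hp, hq]; unfold f1 f2; ring
  rw [hg, mem_span_pair]
  exact ⟨p', q' + X (0,0) * q2, by ring⟩

/-- `D2` is regular modulo `(f1, f2)`. -/
lemma E2b (g : RR) (h : X (1,3) * g ∈ span ({f1, f2} : Set RR)) :
    g ∈ span ({f1, f2} : Set RR) := by
  rw [mem_span_pair] at h
  obtain ⟨p, q, hpq⟩ := h
  have h0 := congrArg (sg (1,3)) hpq.symm
  rw [_root_.map_mul, sg_self, zero_mul, map_add, _root_.map_mul, _root_.map_mul,
    sg_f1_d2, sg_f2_d2] at h0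
  set p0 := sg (1,3) p with hp0
  set q0 := sg (1,3) q with hq0
  have h1 : X (1,1) * (X (1,2) * q0) = p0 * f1 := by linear_combination h0
  have h2 := congrArg (sg (1,1)) h1
  rw [_root_.map_mul, sg_self, zero_mul, _root_.map_mul, sg_f1_b2] at h2
  obtain ⟨p1, hp1e⟩ : X (1,1) ∣ p0 := X_dvd_of_sg_eq_zero (by
    rcases mul_eq_zero.mp h2.symm with h' | h'
    · exact h'
    · exact absurd h' f1_ne)
  have h3 : X (1,2) * q0 = p1 * f1 := by
    apply mul_left_cancel₀ (X_ne_zero ((1,1) : ii))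
    rw [h1, hp1e]; ring
  have h4 := congrArg (sg (1,2)) h3
  rw [_root_.map_mul, sg_self, zero_mul, _root_.map_mul, sg_f1_c2] at h4
  obtain ⟨p2, hp2e⟩ : X (1,2) ∣ p1 := X_dvd_of_sg_eq_zero (by
    rcases mul_eq_zero.mp h4.symm with h' | h'
    · exact h'
    · exact absurd h' f1_ne)
  have h5 : q0 = p2 * f1 := by
    apply mul_left_cancel₀ (X_ne_zero ((1,2) : ii))
    rw [h3, hp2e]; ring
  obtain ⟨p', hp'⟩ := X_dvd_sub_sg (1,3) p
  obtain ⟨q', hq'⟩ := X_dvd_sub_sg (1,3) q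
  have hq : q = p2 * f1 + X (1,3) * q' := by
    rw [← hq0, ← h5] at *; linear_combination hq'
  have hp : p = X (1,1) * (X (1,2) * p2) + X (1,3) * p' := by
    have hd : p - p0 = X (1,3) * p' := hp'
    rw [hp1e, hp2e] at hd; linear_combination hd
  have hg : g = f1 * (p' + X (1,0) * p2) + f2 * q' := by
    apply mul_left_cancel₀ (X_ne_zero ((1,3) : ii))
    rw [← hpq, hp, hq]; unfold f1 f2; ring
  rw [hg, mem_span_pair]
  exact ⟨p' + X (1,0) * p2, q', by ring⟩

lemma mem_of_phi_eq_zero (I : Ideal RR) (w : RR)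
    (hreg : ∀ g, w * g ∈ I → g ∈ I)
    (vals : ii → Localization.Away w)
    (hval : ∀ u, ∃ r n, vals u
        = algebraMap RR (Localization.Away w) r * (IsLocalization.Away.invSelf w)^n
        ∧ w^n * X u - r ∈ I)
    (g : RR)
    (hg : eval₂ ((algebraMap RR (Localization.Away w)).comp MvPolynomial.C) vals g = 0) :
    g ∈ I := by
  set Q := RR ⧸ I
  set π : RR →+* Q := Ideal.Quotient.mk I with hπ
  set Qℓ := Localization.Away (π w)
  set ρ : RR →+* Qℓ := (algebraMap Q Qℓ).comp π with hρ
  have hu : IsUnit (ρ w) := IsLocalization.Away.algebraMap_isUnit (S := Qℓ) (π w)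
  set Ψ : Localization.Away w →+* Qℓ := IsLocalization.Away.lift (g := ρ) w hu with hΨ
  have hΨL : ∀ a : RR, Ψ (algebraMap RR (Localization.Away w) a) = ρ a := fun a =>
    IsLocalization.Away.lift_eq (g := ρ) w hu a
  have hinv : algebraMap RR (Localization.Away w) w * IsLocalization.Away.invSelf w = 1 :=
    IsLocalization.Away.mul_invSelf w
  have hΨinv : ρ w * Ψ (IsLocalization.Away.invSelf w) = 1 := by
    have h := congrArg Ψ hinv
    rwa [_root_.map_mul, map_one, hΨL] at h
  set Φ : RR →+* Localization.Away w :=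
    eval₂Hom ((algebraMap RR (Localization.Away w)).comp MvPolynomial.C) vals with hΦ
  have hcomp : Ψ.comp Φ = ρ := by
    apply MvPolynomial.ringHom_ext
    · intro r
      have h1 : Φ (MvPolynomial.C r) = algebraMap RR (Localization.Away w) (MvPolynomial.C r) := by
        simp [hΦ]
      simp only [RingHom.comp_apply, h1, hΨL]
    · intro u
      obtain ⟨r, n, hv, hmem⟩ := hval u
      have hΦX : Φ (X u) = vals u := by simp [hΦ]
      rw [RingHom.comp_apply, hΦX, hv, _root_.map_mul, map_pow, hΨL]
      refine (hu.pow n).mul_left_cancel ?_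
      have key : ρ (w^n * X u) = ρ r := by
        have h0 : π (w^n * X u - r) = 0 := Ideal.Quotient.eq_zero_iff_mem.mpr hmem
        have h1 : π (w^n * X u) = π r := by rwa [map_sub, sub_eq_zero] at h0
        simp only [hρ, RingHom.comp_apply, h1]
      calc ρ w ^ n * (ρ r * Ψ (IsLocalization.Away.invSelf w) ^ n)
          = ρ r * (ρ w * Ψ (IsLocalization.Away.invSelf w))^n := by ring
        _ = ρ r := by rw [hΨinv, one_pow, mul_one]
        _ = ρ (w^n * X u) := key.symm
        _ = ρ w ^ n * ρ (X u) := by rw [_root_.map_mul, map_pow]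
  have hρg : ρ g = 0 := by
    have h1 : Ψ (Φ g) = ρ g := by rw [← hcomp]; rfl
    rw [← h1]
    have h2 : Φ g = 0 := hg
    rw [h2, map_zero]
  have h3 : algebraMap Q Qℓ (π g) = 0 := hρg
  rw [IsLocalization.map_eq_zero_iff (Submonoid.powers (π w)) Qℓ] at h3
  obtain ⟨⟨m, n, rfl⟩, hm⟩ := h3
  have h4 : π (w ^ n * g) = 0 := by
    rw [_root_.map_mul, map_pow]; exact hm
  have hIn : w ^ n * g ∈ I := Ideal.Quotient.eq_zero_iff_mem.mp h4
  clear * - hIn hreg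
  induction n with
  | zero => simpa using hIn
  | succ n ih =>
      apply ih
      apply hreg
      rw [pow_succ] at hIn
      convert hIn using 1; ring


---- STEP 2 ----
noncomputable def w1 : RR := X (0,3)
lemma w1_ne : w1 ≠ 0 := X_ne_zero _
noncomputable abbrev L1 : RR →+* Localization.Away w1 := algebraMap RR (Localization.Away w1)
noncomputable def vals1 : ii → Localization.Away w1 :=
  fun u => if u = (0,0)
    then L1 (X (0,1) * X (0,2)) * IsLocalization.Away.invSelf w1
    else L1 (X u)

lemma hinv1 : L1 (X (0,3)) * IsLocalization.Away.invSelf w1 = 1 :=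
  IsLocalization.Away.mul_invSelf w1

lemma vals1_A : vals1 (0,0) = L1 (X (0,1) * X (0,2)) * IsLocalization.Away.invSelf w1 :=
  if_pos rfl
lemma vals1_X (u : ii) (h : u ≠ (0,0)) : vals1 u = L1 (X u) := if_neg h

lemma phi1_f1 : eval₂ (L1.comp MvPolynomial.C) vals1 f1 = 0 := by
  simp only [f1, eval₂_sub, eval₂_mul, eval₂_X]
  rw [vals1_A, vals1_X (0,3) (by decide), vals1_X (0,1) (by decide), vals1_X (0,2) (by decide),
    _root_.map_mul]
  linear_combination (L1 (X (0,1)) * L1 (X (0,2))) * hinv1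

lemma phi1_f2 : eval₂ (L1.comp MvPolynomial.C) vals1 f2 = L1 f2 := by
  simp only [f2, eval₂_sub, eval₂_mul, eval₂_X]
  rw [vals1_X (1,0) (by decide), vals1_X (1,3) (by decide), vals1_X (1,1) (by decide),
    vals1_X (1,2) (by decide), map_sub, _root_.map_mul, _root_.map_mul]

lemma step2 (g : RR) (h : f2 * g ∈ span ({f1} : Set RR)) : g ∈ span ({f1} : Set RR) := by
  haveI : IsDomain (Localization.Away w1) :=
    IsLocalization.isDomain_localization (powers_le_nonZeroDivisors_of_noZeroDivisors w1_ne)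
  rw [mem_span_singleton] at h
  obtain ⟨h1, hh⟩ := h
  have hΦ := congrArg (eval₂Hom (L1.comp MvPolynomial.C) vals1) hh
  simp only [coe_eval₂Hom, _root_.map_mul] at hΦ
  rw [phi1_f1, phi1_f2, zero_mul] at hΦ
  have hf2 : L1 f2 ≠ 0 := by
    intro h0
    exact f2_ne (IsLocalization.injective (Localization.Away w1)
      (powers_le_nonZeroDivisors_of_noZeroDivisors w1_ne) (by rw [h0, map_zero]))
  have hΦg : eval₂ (L1.comp MvPolynomial.C) vals1 g = 0 := by
    rcases mul_eq_zero.mp hΦ with h' | h'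
    · exact absurd h' hf2
    · exact h'
  refine mem_of_phi_eq_zero _ w1 ?_ vals1 ?_ g hΦg
  · intro g' hg'
    rw [mem_span_singleton] at *
    exact E1 g' hg'
  · intro u
    by_cases hu : u = (0,0)
    · subst hu
      refine ⟨X (0,1) * X (0,2), 1, by simp [vals1], ?_⟩
      rw [mem_span_singleton]
      exact ⟨1, by unfold f1 w1; ring⟩
    · exact ⟨X u, 0, by rw [vals1_X u hu]; simp, by simp⟩

---- STEP 3 ----
noncomputable def w2 : RR := X (0,3) * X (1,3)
lemma w2_ne : w2 ≠ 0 := mul_ne_zero (X_ne_zero _) (X_ne_zero _)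
noncomputable abbrev L2 : RR →+* Localization.Away w2 := algebraMap RR (Localization.Away w2)
noncomputable def vals2 : ii → Localization.Away w2 :=
  fun u => if u = (0,0)
    then L2 (X (0,1) * X (0,2) * X (1,3)) * IsLocalization.Away.invSelf w2
    else if u = (1,0)
    then L2 (X (1,1) * X (1,2) * X (0,3)) * IsLocalization.Away.invSelf w2
    else L2 (X u)

lemma hinv2 : L2 (X (0,3)) * L2 (X (1,3)) * IsLocalization.Away.invSelf w2 = 1 := by
  have h := IsLocalization.Away.mul_invSelf (S := Localization.Away w2) w2
  rw [w2] at h; rw [_root_.map_mul] at h; exact h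

lemma vals2_A1 : vals2 (0,0) = L2 (X (0,1) * X (0,2) * X (1,3)) * IsLocalization.Away.invSelf w2 :=
  if_pos rfl
lemma vals2_A2 : vals2 (1,0) = L2 (X (1,1) * X (1,2) * X (0,3)) * IsLocalization.Away.invSelf w2 := by
  rw [vals2, if_neg (by decide), if_pos rfl]
lemma vals2_X (u : ii) (h : u ≠ (0,0)) (h' : u ≠ (1,0)) : vals2 u = L2 (X u) := by
  rw [vals2, if_neg h, if_neg h']

lemma phi2_f1 : eval₂ (L2.comp MvPolynomial.C) vals2 f1 = 0 := by
  simp only [f1, eval₂_sub, eval₂_mul, eval₂_X]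
  rw [vals2_A1, vals2_X (0,3) (by decide) (by decide), vals2_X (0,1) (by decide) (by decide),
    vals2_X (0,2) (by decide) (by decide), _root_.map_mul, _root_.map_mul]
  linear_combination (L2 (X (0,1)) * L2 (X (0,2))) * hinv2

lemma phi2_f2 : eval₂ (L2.comp MvPolynomial.C) vals2 f2 = 0 := by
  simp only [f2, eval₂_sub, eval₂_mul, eval₂_X]
  rw [vals2_A2, vals2_X (1,3) (by decide) (by decide), vals2_X (1,1) (by decide) (by decide),
    vals2_X (1,2) (by decide) (by decide), _root_.map_mul, _root_.map_mul]
  linear_combination (L2 (X (1,1)) * L2 (X (1,2))) * hinv2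

lemma phi2_f3 : eval₂ (L2.comp MvPolynomial.C) vals2 f3 * L2 w2 = L2 (uu * vv) := by
  simp only [f3, uu, vv, eval₂_sub, eval₂_add, eval₂_mul, eval₂_X]
  rw [vals2_A1, vals2_A2, vals2_X (0,1) (by decide) (by decide),
    vals2_X (0,2) (by decide) (by decide), vals2_X (0,3) (by decide) (by decide),
    vals2_X (1,1) (by decide) (by decide), vals2_X (1,2) (by decide) (by decide),
    vals2_X (1,3) (by decide) (by decide)]
  simp only [_root_.map_mul, map_sub]
  rw [show L2 w2 = L2 (X (0,3)) * L2 (X (1,3)) by rw [← _root_.map_mul]; rfl]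
  linear_combination (L2 (X (0,1)) * L2 (X (0,2)) * L2 (X (1,3)) * L2 (X (1,3))
    + L2 (X (1,1)) * L2 (X (1,2)) * L2 (X (0,3)) * L2 (X (0,3))) * hinv2

lemma step3 (g : RR) (h : f3 * g ∈ span ({f1, f2} : Set RR)) :
    g ∈ span ({f1, f2} : Set RR) := by
  haveI : IsDomain (Localization.Away w2) :=
    IsLocalization.isDomain_localization (powers_le_nonZeroDivisors_of_noZeroDivisors w2_ne)
  rw [mem_span_pair] at h
  obtain ⟨p, q, hpq⟩ := h
  have hΦ := congrArg (eval₂Hom (L2.comp MvPolynomial.C) vals2) hpq.symm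
  simp only [coe_eval₂Hom, _root_.map_mul, map_add] at hΦ
  rw [phi2_f1, phi2_f2, mul_zero, mul_zero, add_zero] at hΦ
  -- hΦ : 0 = Φ f3 * Φ g
  have hf3 : eval₂ (L2.comp MvPolynomial.C) vals2 f3 ≠ 0 := by
    intro h0
    have huv : L2 (uu * vv) = 0 := by rw [← phi2_f3, h0, zero_mul]
    have : uu * vv = 0 := IsLocalization.injective (Localization.Away w2)
      (powers_le_nonZeroDivisors_of_noZeroDivisors w2_ne) (by rw [huv, map_zero])
    exact (mul_ne_zero uu_ne vv_ne) this
  have hΦg : eval₂ (L2.comp MvPolynomial.C) vals2 g = 0 := by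
    rcases mul_eq_zero.mp hΦ with h' | h'
    · exact absurd h' hf3
    · exact h'
  refine mem_of_phi_eq_zero _ w2 ?_ vals2 ?_ g hΦg
  · intro g' hg'
    apply E2a
    apply E2b
    have : X (1,3) * (X (0,3) * g') = w2 * g' := by rw [w2]; ring
    rw [this]; exact hg'
  · intro u
    by_cases hu : u = (0,0)
    · subst hu
      refine ⟨X (0,1) * X (0,2) * X (1,3), 1, by simp [vals2], ?_⟩
      rw [mem_span_pair]
      exact ⟨X (1,3), 0, by unfold f1 f2 w2; ring⟩
    · by_cases hu' : u = (1,0)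
      · subst hu'
        refine ⟨X (1,1) * X (1,2) * X (0,3), 1, by simp [vals2], ?_⟩
        rw [mem_span_pair]
        exact ⟨0, X (0,3), by unfold f1 f2 w2; ring⟩
      · exact ⟨X u, 0, by rw [vals2_X u hu hu']; simp, by simp⟩

lemma bridge (I : Ideal RR) (f : RR) (h : ∀ g, f * g ∈ I → g ∈ I) :
    IsSMulRegular (RR ⧸ (I • ⊤ : Submodule RR RR)) f := by
  have hI : (I • ⊤ : Submodule RR RR) = I := by rw [smul_eq_mul, Ideal.mul_top]
  intro a b hab
  obtain ⟨x, rfl⟩ := Submodule.Quotient.mk_surjective _ a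
  obtain ⟨y, rfl⟩ := Submodule.Quotient.mk_surjective _ b
  have hab' : (Submodule.Quotient.mk (f • x) : RR ⧸ (I • ⊤ : Submodule RR RR))
      = Submodule.Quotient.mk (f • y) := by
    rw [Submodule.Quotient.mk_smul, Submodule.Quotient.mk_smul]; exact hab
  rw [Submodule.Quotient.eq] at hab'
  rw [Submodule.Quotient.eq]
  have he : f • x - f • y = f * (x - y) := by
    simp only [smul_eq_mul]; ring
  rw [he, hI] at hab'
  rw [hI]
  exact h _ hab'

lemma main : RingTheory.Sequence.IsWeaklyRegular RR [f1, f2, f3] := by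
  rw [RingTheory.Sequence.isWeaklyRegular_iff]
  intro i hi
  simp only [List.length_cons, List.length_nil] at hi
  interval_cases i
  · have e : Ideal.ofList (List.take 0 [f1, f2, f3]) = (⊥ : Ideal RR) := Ideal.ofList_nil
    exact bridge _ f1 (fun g hg => by
      rw [e, Ideal.mem_bot] at hg ⊢
      rcases mul_eq_zero.mp hg with h' | h'
      · exact absurd h' f1_ne
      · exact h')
  · have e : Ideal.ofList (List.take 1 [f1, f2, f3]) = span ({f1} : Set RR) :=
      Ideal.ofList_singleton f1
    exact bridge _ f2 (fun g hg => by
      rw [e] at hg ⊢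
      exact step2 g hg)
  · have e : Ideal.ofList (List.take 2 [f1, f2, f3]) = span ({f1, f2} : Set RR) := by
      show Ideal.ofList [f1, f2] = _
      rw [Ideal.ofList_cons, Ideal.ofList_singleton, Ideal.span_insert]
    exact bridge _ f3 (fun g hg => by
      rw [e] at hg ⊢
      exact step3 g hg)



end Stmt10Aux

/-- in `ℂ[k₁,k₂]` (eight variables, `kᵢ = (aᵢ,bᵢ,cᵢ,dᵢ)` indexed
by `(i, 0..3)`), the sequence
`(a₁d₁ - b₁c₁, a₂d₂ - b₂c₂, a₁d₂ - b₁c₂ + a₂d₁ - b₂c₁)` is a regular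
sequence (each element is injective as a multiplication operator on the
quotient by its predecessors). -/
theorem stmt_10 :
    RingTheory.Sequence.IsWeaklyRegular (MvPolynomial (Fin 2 × Fin 4) ℂ)
      ([X (0, 0) * X (0, 3) - X (0, 1) * X (0, 2),
        X (1, 0) * X (1, 3) - X (1, 1) * X (1, 2),
        X (0, 0) * X (1, 3) - X (0, 1) * X (1, 2) + X (1, 0) * X (0, 3) - X (1, 1) * X (0, 2)] :
        List (MvPolynomial (Fin 2 × Fin 4) ℂ)) := by
  exact Stmt10Aux.main
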